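/- Let (X, ρ) be an extended metric space (ρ may take value +∞), and let d be a natural number. Then the following are equivalent: (1) for every r > 0 there is an equivalence relation E on X whose classes have uniformly bounded diameter such that every closed ball of radius r meets at most d+1 classes of E; (2) for every r > 0 there are sets U_0, ..., U_d covering X such that for each i, the equivalence relation on U_i generated by pairs at distance ≤ r has uniformly bounded classes. -/

import Mathlib

open scoped ENNReal NNReal

/-- The `s`-walk equivalence relation on `U`: the smallest equivalence relation
containing all pairs in `U × U` at extended distance at most `s`. -/
def walkRel {X : Type*} [EMetricSpace X] (U : Set X) (s : ℝ≥0∞) : X → X → Prop :=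
  Relation.EqvGen fun a b => a ∈ U ∧ b ∈ U ∧ edist a b ≤ s

/-- Equivalence of the two definitions of (standard) asymptotic dimension `≤ d`
for an extended metric space. -/
theorem stmt0 {X : Type*} [EMetricSpace X] (d : ℕ) :
    (∀ r : ℝ≥0, 0 < r →
      ∃ E : Setoid X,
        (∃ R : ℝ≥0, ∀ x y : X, E.r x y → edist x y ≤ (R : ℝ≥0∞)) ∧
        ∀ x : X, ∃ s : Finset X, s.card ≤ d + 1 ∧
          ∀ y : X, edist x y ≤ (r : ℝ≥0∞) → ∃ z ∈ s, E.r y z)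
    ↔
    (∀ r : ℝ≥0, 0 < r →
      ∃ U : Fin (d + 1) → Set X, (⋃ i, U i) = Set.univ ∧
        ∀ i, ∃ R : ℝ≥0, ∀ x y : X,
          walkRel (U i) (r : ℝ≥0∞) x y → edist x y ≤ (R : ℝ≥0∞)) := by
  constructor
  · -- (1) → (2)
    intro h1 r hr
    classical
    obtain ⟨E, ⟨R, hR⟩, hball⟩ := h1 ((d + 1) * r) (by positivity)
    choose F hFcard hF using hball
    -- the set of classes meeting the closed `t`-ball around `x`
    set N : X → ℝ≥0∞ → Set (Quotient E) :=
      fun x t => {c | ∃ w, Quotient.mk E w = c ∧ edist x w ≤ t} with hNdef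
    have hcast : ((((d : ℕ) + 1) * r : ℝ≥0) : ℝ≥0∞) = ((d : ℝ≥0∞) + 1) * (r : ℝ≥0∞) := by
      push_cast; ring
    have hmono : ∀ x (t t' : ℝ≥0∞), t ≤ t' → N x t ⊆ N x t' := by
      rintro x t t' htt c ⟨w, hw, hwt⟩
      exact ⟨w, hw, hwt.trans htt⟩
    have hmove : ∀ (x y : X) (t : ℝ≥0∞), edist x y ≤ (r : ℝ≥0∞) → N y t ⊆ N x (t + r) := by
      rintro x y t hxy c ⟨w, hw, hwt⟩
      exact ⟨w, hw, (edist_triangle x y w).trans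
        ((add_le_add hxy hwt).trans_eq (add_comm _ _))⟩
    have hsub : ∀ x (t : ℝ≥0∞), t ≤ ((d : ℝ≥0∞) + 1) * r →
        N x t ⊆ ↑((F x).image (Quotient.mk E)) := by
      rintro x t ht c ⟨w, hw, hwt⟩
      obtain ⟨z, hz, hwz⟩ := hF x w (by rw [hcast]; exact hwt.trans ht)
      have : Quotient.mk E w = Quotient.mk E z := Quotient.sound hwz
      rw [← hw, this]
      exact Finset.mem_coe.mpr (Finset.mem_image.mpr ⟨z, hz, rfl⟩)
    have hfin : ∀ x (t : ℝ≥0∞), t ≤ ((d : ℝ≥0∞) + 1) * r → (N x t).Finite := by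
      intro x t ht
      exact Set.Finite.subset ((F x).image (Quotient.mk E)).finite_toSet (hsub x t ht)
    have hcard : ∀ x (t : ℝ≥0∞), t ≤ ((d : ℝ≥0∞) + 1) * r → (N x t).ncard ≤ d + 1 := by
      intro x t ht
      calc (N x t).ncard ≤ (↑((F x).image (Quotient.mk E)) : Set (Quotient E)).ncard :=
            Set.ncard_le_ncard (hsub x t ht) ((F x).image (Quotient.mk E)).finite_toSet
        _ = ((F x).image (Quotient.mk E)).card := Set.ncard_coe_finset _
        _ ≤ (F x).card := Finset.card_image_le
        _ ≤ d + 1 := hFcard x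
    have hmemN : ∀ x (t : ℝ≥0∞), Quotient.mk E x ∈ N x t := by
      intro x t; exact ⟨x, rfl, by simp⟩
    have hargle : ∀ j : ℕ, j ≤ d + 1 → ((j : ℝ≥0∞) * r ≤ ((d : ℝ≥0∞) + 1) * r) := by
      intro j hj
      have : (j : ℝ≥0∞) ≤ (d : ℝ≥0∞) + 1 := by exact_mod_cast hj
      exact mul_le_mul_left this r
    set P : X → ℕ → Prop := fun x k => k + 1 ≤ (N x ((k : ℝ≥0∞) * r)).ncard with hPdef
    have hPdec : ∀ x, DecidablePred (P x) := fun x k => Nat.decLe _ _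
    set k : X → ℕ := fun x => @Nat.findGreatest (P x) (hPdec x) d with hkdef
    have hP0 : ∀ x, P x 0 := by
      intro x
      have hne : (N x (((0 : ℕ) : ℝ≥0∞) * r)).Nonempty := ⟨_, hmemN x _⟩
      have hfin0 : (N x (((0 : ℕ) : ℝ≥0∞) * r)).Finite :=
        hfin x _ (hargle 0 (by omega))
      simpa [hPdef] using (Set.ncard_pos hfin0).mpr hne
    have hk_le : ∀ x, k x ≤ d := fun x => Nat.findGreatest_le d
    have hk_spec : ∀ x, k x + 1 ≤ (N x ((k x : ℝ≥0∞) * r)).ncard := by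
      intro x
      exact Nat.findGreatest_spec (Nat.zero_le d) (hP0 x)
    have hub : ∀ x, (N x ((k x : ℝ≥0∞) * r + r)).ncard ≤ k x + 1 := by
      intro x
      rcases eq_or_lt_of_le (hk_le x) with he | hlt
      · have harg : ((k x : ℝ≥0∞) * r + r) ≤ ((d : ℝ≥0∞) + 1) * r := by
          rw [he]; rw [add_mul, one_mul]
        exact (hcard x _ harg).trans (by omega)
      · have hng : ¬ P x (k x + 1) :=
          Nat.findGreatest_is_greatest (Nat.lt_succ_self _) hlt
        have hrw : ((k x : ℝ≥0∞) * r + r) = (((k x + 1 : ℕ)) : ℝ≥0∞) * r := by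
          push_cast; ring
        rw [hrw]
        simp only [hPdef] at hng
        omega
    have key2 : ∀ x, N x ((k x : ℝ≥0∞) * r + r) = N x ((k x : ℝ≥0∞) * r) := by
      intro x
      have hfin' : (N x ((k x : ℝ≥0∞) * r + r)).Finite := by
        refine hfin x _ ?_
        have : ((k x : ℝ≥0∞) * r + r) = (((k x + 1 : ℕ)) : ℝ≥0∞) * r := by push_cast; ring
        rw [this]
        exact hargle _ (by have := hk_le x; omega)
      exact (Set.eq_of_subset_of_ncard_le (hmono x _ _ le_self_add)
        ((hub x).trans (hk_spec x)) hfin').symm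
    have kcard : ∀ x, (N x ((k x : ℝ≥0∞) * r)).ncard = k x + 1 := by
      intro x
      have h1 := hub x
      rw [key2 x] at h1
      exact le_antisymm h1 (hk_spec x)
    have key3 : ∀ x y, edist x y ≤ (r : ℝ≥0∞) → k x = k y →
        N x ((k x : ℝ≥0∞) * r) = N y ((k y : ℝ≥0∞) * r) := by
      intro x y hxy hk
      have hsub1 : N x ((k x : ℝ≥0∞) * r) ⊆ N y ((k y : ℝ≥0∞) * r) := by
        have h1 : N x ((k x : ℝ≥0∞) * r) ⊆ N y ((k x : ℝ≥0∞) * r + r) :=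
          hmove y x _ (by rw [edist_comm]; exact hxy)
        have h2 : N y ((k x : ℝ≥0∞) * r + r) = N y ((k y : ℝ≥0∞) * r) := by
          rw [hk]; exact key2 y
        exact h1.trans h2.subset
      refine Set.eq_of_subset_of_ncard_le hsub1 ?_ ?_
      · rw [kcard y, kcard x, hk]
      · exact hfin y _ (hargle _ (by have := hk_le y; omega))
    refine ⟨fun i => {x | k x = (i : ℕ)}, ?_, ?_⟩
    · apply Set.eq_univ_iff_forall.mpr
      intro x
      exact Set.mem_iUnion.mpr ⟨⟨k x, by have := hk_le x; omega⟩, rfl⟩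
    · intro i
      refine ⟨R + d * r, ?_⟩
      intro x y hxy
      have inv : ∀ a b : X, walkRel {x | k x = (i : ℕ)} (r : ℝ≥0∞) a b →
          a = b ∨ (k a = (i : ℕ) ∧ k b = (i : ℕ) ∧
            N a ((i : ℕ) * (r : ℝ≥0∞)) = N b ((i : ℕ) * (r : ℝ≥0∞))) := by
        intro a b hab
        induction hab with
        | rel a b h =>
          obtain ⟨ha, hb, hd⟩ := h
          right
          refine ⟨ha, hb, ?_⟩
          have h3 := key3 a b hd (by rw [ha, hb])
          rw [ha, hb] at h3
          exact h3
        | refl a => exact Or.inl rfl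
        | symm a b _ ih =>
          rcases ih with rfl | ⟨h1, h2, h3⟩
          · exact Or.inl rfl
          · exact Or.inr ⟨h2, h1, h3.symm⟩
        | trans a b c _ _ ih1 ih2 =>
          rcases ih1 with rfl | ⟨h1, h2, h3⟩
          · exact ih2
          · rcases ih2 with rfl | ⟨h4, h5, h6⟩
            · exact Or.inr ⟨h1, h2, h3⟩
            · exact Or.inr ⟨h1, h5, h3.trans h6⟩
      rcases inv x y hxy with rfl | ⟨hkx, hky, hNeq⟩
      · simp
      · have hxmem : Quotient.mk E x ∈ N y ((i : ℕ) * (r : ℝ≥0∞)) :=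
          hNeq ▸ hmemN x _
        obtain ⟨w, hw, hwle⟩ := hxmem
        have hwx : E.r w x := Quotient.exact hw
        have hi_le : ((i : ℕ) : ℝ≥0∞) ≤ (d : ℝ≥0∞) := by
          exact_mod_cast Nat.lt_succ_iff.mp i.2
        calc edist x y ≤ edist x w + edist w y := edist_triangle x w y
          _ ≤ (R : ℝ≥0∞) + ((i : ℕ) : ℝ≥0∞) * r := by
              refine add_le_add ?_ ?_
              · rw [edist_comm]; exact hR w x hwx
              · rw [edist_comm]; exact hwle
          _ ≤ (R : ℝ≥0∞) + (d : ℝ≥0∞) * r := by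
              exact add_le_add_right (mul_le_mul_left hi_le r) _
          _ = ((R + d * r : ℝ≥0) : ℝ≥0∞) := by push_cast; ring
  · -- (2) → (1)
    intro h2 r hr
    classical
    obtain ⟨U, hUcov, hUb⟩ := h2 (2 * r) (by positivity)
    choose Rb hRb using hUb
    have hx : ∀ x : X, ∃ i, x ∈ U i := by
      intro x
      have : x ∈ ⋃ i, U i := by rw [hUcov]; trivial
      exact Set.mem_iUnion.mp this
    choose f hf using hx
    refine ⟨⟨fun x y => f x = f y ∧ walkRel (U (f x)) ((2 * r : ℝ≥0) : ℝ≥0∞) x y, ?_, ?_, ?_⟩,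
      ⟨Finset.univ.sup Rb, ?_⟩, ?_⟩
    · exact fun x => ⟨rfl, Relation.EqvGen.refl x⟩
    · rintro x y ⟨h1, h2'⟩
      exact ⟨h1.symm, by rw [← h1]; exact Relation.EqvGen.symm _ _ h2'⟩
    · rintro x y z ⟨h1, h2'⟩ ⟨h3, h4⟩
      refine ⟨h1.trans h3, ?_⟩
      rw [← h1] at h4
      exact Relation.EqvGen.trans _ _ _ h2' h4
    · rintro x y ⟨h1, h2'⟩
      calc edist x y ≤ ((Rb (f x) : ℝ≥0∞)) := hRb (f x) x y h2'
        _ ≤ _ := by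
            exact_mod_cast ENNReal.coe_le_coe.mpr (Finset.le_sup (Finset.mem_univ (f x)))
    · intro x
      set g : Fin (d + 1) → X := fun i =>
        if h : ∃ y, edist x y ≤ (r : ℝ≥0∞) ∧ f y = i then h.choose else x with hgdef
      refine ⟨Finset.univ.image g, ?_, ?_⟩
      · calc (Finset.univ.image g).card ≤ (Finset.univ : Finset (Fin (d + 1))).card :=
              Finset.card_image_le
          _ = d + 1 := by simp
      · intro y hy
        have hex : ∃ y', edist x y' ≤ (r : ℝ≥0∞) ∧ f y' = f y := ⟨y, hy, rfl⟩
        refine ⟨g (f y), Finset.mem_image.mpr ⟨f y, Finset.mem_univ _, rfl⟩, ?_⟩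
        have hspec : edist x (g (f y)) ≤ (r : ℝ≥0∞) ∧ f (g (f y)) = f y := by
          rw [hgdef]
          simp only [dif_pos hex]
          exact hex.choose_spec
        refine ⟨hspec.2.symm, ?_⟩
        apply Relation.EqvGen.rel
        refine ⟨hf y, ?_, ?_⟩
        · have := hf (g (f y))
          rw [hspec.2] at this
          exact this
        · calc edist y (g (f y)) ≤ edist y x + edist x (g (f y)) := edist_triangle _ _ _
            _ ≤ (r : ℝ≥0∞) + (r : ℝ≥0∞) := by
                refine add_le_add ?_ hspec.1
                rw [edist_comm]; exact hy
            _ = ((2 * r : ℝ≥0) : ℝ≥0∞) := by push_cast; ring
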